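/- Let (L, Q) be a unimodular lattice and w ∈ L a primitive isotropic vector. The map A → Λ_w sending an even element e (lifted to ℤ{u,w}⊥ ≅ w⊥/ℤw) to the Eichler transformation E(w,e) is a group isomorphism from the subgroup A of even elements of (w⊥/ℤw, Q̄) onto Λ_w. -/

import Mathlib

/-- The map `e ↦ E(w,e)`, from the group `A` of even vectors in
`ℤ{u,w}⊥ ≅ w⊥/ℤw` to `Λ_w`, is a group isomorphism: each `E(w,e)` is an isometry
fixing `w` and acting trivially on `w⊥/ℤw`, the assignment is a homomorphism,
injective, and every element of `Λ_w` arises this way. -/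
theorem stmt_5 {L : Type*} [AddCommGroup L] [Module.Free ℤ L] [Module.Finite ℤ L]
    (Q : L →ₗ[ℤ] L →ₗ[ℤ] ℤ)
    (hsymm : ∀ x y, Q x y = Q y x)
    (hunimod : ∀ φ : L →ₗ[ℤ] ℤ, ∃! y : L, ∀ x, Q y x = φ x)
    (w : L) (hwiso : Q w w = 0)
    (hprim : ∀ (a : ℤ) (x : L), a • x = w → IsUnit a)
    (u : L) (hu : Q w u = 1) :
    let E : L → L → L := fun e x =>
      x + Q w x • e - Q e x • w - ((Q e e / 2) * Q w x) • w
    -- E(w,e) lands in Λ_w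
    (∀ e, Q e u = 0 → Q e w = 0 → Even (Q e e) →
      (∀ x y, E e (x + y) = E e x + E e y) ∧
      Function.Bijective (E e) ∧
      (∀ x y, Q (E e x) (E e y) = Q x y) ∧
      E e w = w ∧
      (∀ x, Q w x = 0 → ∃ m : ℤ, E e x - x = m • w)) ∧
    -- homomorphism
    (∀ e₁ e₂, Q e₁ u = 0 → Q e₁ w = 0 → Even (Q e₁ e₁) →
      Q e₂ u = 0 → Q e₂ w = 0 → Even (Q e₂ e₂) →
      ∀ x, E e₁ (E e₂ x) = E (e₁ + e₂) x) ∧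
    -- injective
    (∀ e₁ e₂, Q e₁ u = 0 → Q e₁ w = 0 → Q e₂ u = 0 → Q e₂ w = 0 →
      (∀ x, E e₁ x = E e₂ x) → e₁ = e₂) ∧
    -- surjective onto Λ_w
    (∀ f : L ≃ₗ[ℤ] L, (∀ x y, Q (f x) (f y) = Q x y) → f w = w →
      (∀ x, Q w x = 0 → ∃ m : ℤ, f x - x = m • w) →
      ∃ e, Q e u = 0 ∧ Q e w = 0 ∧ Even (Q e e) ∧ ∀ x, f x = E e x) := by
  intro E
  have hE : ∀ e x, E e x = x + Q w x • e - Q e x • w - ((Q e e / 2) * Q w x) • w :=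
    fun _ _ => rfl
  -- core homomorphism computation
  have key : ∀ e₁ e₂, Q e₁ w = 0 → Even (Q e₁ e₁) → Q e₂ w = 0 → Even (Q e₂ e₂) →
      ∀ x, E e₁ (E e₂ x) = E (e₁ + e₂) x := by
    rintro e₁ e₂ h1w ⟨c₁, hc₁⟩ h2w ⟨c₂, hc₂⟩ x
    have hw1 : Q w e₁ = 0 := (hsymm w e₁).trans h1w
    have hw2 : Q w e₂ = 0 := (hsymm w e₂).trans h2w
    have hd1 : Q e₁ e₁ / 2 = c₁ := by omega
    have hd2 : Q e₂ e₂ / 2 = c₂ := by omega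
    have h21 : Q e₂ e₁ = Q e₁ e₂ := hsymm e₂ e₁
    have hd12 : Q (e₁ + e₂) (e₁ + e₂) / 2 = c₁ + c₂ + Q e₁ e₂ := by
      have hexp : Q (e₁ + e₂) (e₁ + e₂) = Q e₁ e₁ + Q e₁ e₂ + Q e₂ e₁ + Q e₂ e₂ := by
        simp only [map_add, LinearMap.add_apply]; ring
      omega
    simp only [hE]
    rw [hd12, hd1, hd2]
    simp only [map_add, map_sub, map_smul, LinearMap.add_apply, LinearMap.sub_apply,
      LinearMap.smul_apply, smul_eq_mul, hw1, hw2, h1w, h2w, h21, hwiso,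
      mul_zero, zero_mul, add_zero, sub_zero, zero_smul]
    module
  have hE0 : ∀ x, E 0 x = x := by
    intro x
    simp [hE]
  refine ⟨?_, ?_, ?_, ?_⟩
  · -- each E e lands in Λ_w
    rintro e heu hew heven
    obtain ⟨c, hc⟩ := heven
    have hd : Q e e / 2 = c := by omega
    have hwe : Q w e = 0 := (hsymm w e).trans hew
    have hne : Q (-e) w = 0 := by simp [hew]
    have hneven : Even (Q (-e) (-e)) := by
      simp only [map_neg, LinearMap.neg_apply, neg_neg]; exact ⟨c, hc⟩
    have hleft : ∀ x, E (-e) (E e x) = x := by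
      intro x
      rw [key (-e) e hne hneven hew ⟨c, hc⟩ x, neg_add_cancel, hE0]
    have hright : ∀ x, E e (E (-e) x) = x := by
      intro x
      rw [key e (-e) hew ⟨c, hc⟩ hne hneven x, add_neg_cancel, hE0]
    refine ⟨?_, ?_, ?_, ?_, ?_⟩
    · intro x y
      simp only [hE, map_add, LinearMap.add_apply]
      module
    · exact Function.bijective_iff_has_inverse.mpr ⟨E (-e), hleft, hright⟩
    · intro x y
      simp only [hE]
      rw [hd]
      simp only [map_add, map_sub, map_smul, LinearMap.add_apply, LinearMap.sub_apply,
        LinearMap.smul_apply, smul_eq_mul, hsymm x e, hsymm x w, hsymm y e, hsymm y w,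
        hwe, hew, hwiso, hc]
      ring
    · simp [hE, hwiso, hew]
    · intro x hx
      refine ⟨-Q e x, ?_⟩
      simp only [hE, hx, zero_smul, mul_zero, add_zero, neg_smul]
      abel
  · -- homomorphism
    intro e₁ e₂ _ h1w h1e _ h2w h2e x
    exact key e₁ e₂ h1w h1e h2w h2e x
  · -- injectivity
    intro e₁ e₂ h1u h1w h2u h2w heq
    have h := heq u
    simp only [hE, hu, one_smul, h1u, h2u, zero_smul, sub_zero, mul_one] at h
    -- h : u + e₁ - (Q e₁ e₁ / 2) • w = u + e₂ - (Q e₂ e₂ / 2) • w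
    have h' : e₁ - (Q e₁ e₁ / 2) • w = e₂ - (Q e₂ e₂ / 2) • w := by
      have := h
      abel_nf at this ⊢
      linear_combination (norm := abel) this - (1 : ℤ) • (rfl : u = u)
    have hcoef : Q e₁ e₁ / 2 = Q e₂ e₂ / 2 := by
      have h2 := congrArg (fun z => Q z u) h'
      simp only [map_sub, map_smul, LinearMap.sub_apply, LinearMap.smul_apply,
        smul_eq_mul, h1u, h2u, hu, mul_one, zero_sub] at h2
      omega
    rw [hcoef] at h'
    rwa [sub_left_inj] at h'
  · -- surjectivity
    intro f hf hfw hfk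
    set v : L := f u - u with hv
    have hwfu : Q w (f u) = Q w u := by
      have := hf w u
      rwa [hfw] at this
    have hwv : Q w v = 0 := by
      simp [hv, map_sub, hwfu]
    set e : L := v - Q u v • w with he
    have heu : Q e u = 0 := by
      simp only [he, map_sub, map_smul, LinearMap.sub_apply, LinearMap.smul_apply,
        smul_eq_mul, hu, mul_one]
      rw [hsymm v u]
      ring
    have hew : Q e w = 0 := by
      simp only [he, map_sub, map_smul, LinearMap.sub_apply, LinearMap.smul_apply,
        smul_eq_mul, hwiso, mul_zero, sub_zero]
      rw [hsymm v w]
      exact hwv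
    have hvv : Q v v = -Q u v + -Q u v := by
      have h1 : Q (f u) (f u) = Q u u := hf u u
      have h2 : Q (f u) u = Q u (f u) := hsymm _ _
      simp only [hv, map_sub, LinearMap.sub_apply]
      rw [h1, h2]
      ring
    have hee : Q e e = -Q u v + -Q u v := by
      have hvw : Q v w = 0 := (hsymm v w).trans hwv
      simp only [he, map_sub, map_smul, LinearMap.sub_apply, LinearMap.smul_apply,
        smul_eq_mul, hwiso, hwv, hvw, mul_zero, sub_zero]
      rw [hvv]
    have hd : Q e e / 2 = -Q u v := by omega
    refine ⟨e, heu, hew, ⟨-Q u v, hee⟩, ?_⟩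
    intro x
    set α : ℤ := Q w x with hα
    set β : ℤ := Q u x - α * Q u u with hβ
    set k : L := x - α • u - β • w with hk
    have huw : Q u w = 1 := (hsymm u w).trans hu
    have hQwk : Q w k = 0 := by
      simp only [hk, map_sub, map_smul, LinearMap.sub_apply, LinearMap.smul_apply,
        smul_eq_mul, hu, hwiso, mul_one, mul_zero, sub_zero, ← hα]
      ring
    have hQuk : Q u k = 0 := by
      simp only [hk, map_sub, map_smul, LinearMap.sub_apply, LinearMap.smul_apply,
        smul_eq_mul, huw, mul_one, hβ]
      ring
    obtain ⟨m, hm⟩ := hfk k hQwk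
    have hfkk : f k = k + m • w := by
      have := hm
      linear_combination (norm := abel) this
    have hfuw : Q (f u) w = 1 := by
      have := hf u w
      rw [hfw] at this
      rw [this, huw]
    have hfuk : Q (f u) k = -m := by
      have h1 : Q (f u) (f k) = Q u k := hf u k
      rw [hfkk, hQuk] at h1
      simp only [map_add, map_smul, smul_eq_mul, hfuw, mul_one] at h1
      omega
    have hvk : Q v k = -m := by
      simp [hv, map_sub, LinearMap.sub_apply, hfuk, hQuk]
    have hQex : Q e x = -m := by
      have hxk : x = k + α • u + β • w := by
        rw [hk]; abel
      rw [hxk]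
      simp only [map_add, map_smul, smul_eq_mul, heu, hew, mul_zero, add_zero]
      rw [he]
      simp only [map_sub, map_smul, LinearMap.sub_apply, LinearMap.smul_apply,
        smul_eq_mul, hvk, hQwk, mul_zero, sub_zero]
    have hfx : f x = x + α • v + m • w := by
      have hxk : x = k + α • u + β • w := by
        rw [hk]; abel
      calc f x = f (k + α • u + β • w) := by rw [← hxk]
        _ = f k + α • f u + β • f w := by simp [map_add, map_smul]
        _ = (k + m • w) + α • (u + v) + β • w := by
            have hfu : f u = u + v := by rw [hv]; abel
            rw [hfkk, hfu, hfw]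
        _ = x + α • v + m • w := by rw [hxk]; module
    rw [hfx, hE, hd, hQex, ← hα, he]
    module
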